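/- With ψ defined by ψ(𝒦) = (|𝒦| − 1)·I(X; X_∅) − H(X_(2^𝒦)|X) + Σ_{𝒜⊆𝒦} H(X_𝒜 | X_(2^𝒜−{𝒜})) for jointly distributed finite random variables X and (X_𝒜)_{𝒜⊆{1,…,L}}, ψ is supermodular: for all 𝒮, 𝒯 ⊆ {1,…,L}, ψ(𝒮) + ψ(𝒯) ≤ ψ(𝒮 ∪ 𝒯) + ψ(𝒮 ∩ 𝒯). -/

import Mathlib

open scoped BigOperators

namespace MDC

structure FinProb (Ω : Type*) [Fintype Ω] where
  μ : Ω → ℝ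
  nonneg : ∀ ω, 0 ≤ μ ω
  sum_one : ∑ ω, μ ω = 1

variable {Ω : Type*} [Fintype Ω]

/-- Probability that the random variable `f` takes the value `a`. -/
noncomputable def pr (P : FinProb Ω) {A : Type*} [DecidableEq A] (f : Ω → A) (a : A) : ℝ :=
  ∑ ω, if f ω = a then P.μ ω else 0

/-- Shannon entropy (base 2) of a finite random variable. -/
noncomputable def H (P : FinProb Ω) {A : Type*} [Fintype A] [DecidableEq A] (f : Ω → A) : ℝ :=
  - ∑ a, pr P f a * Real.logb 2 (pr P f a)

/-- Conditional entropy H(f|g). -/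
noncomputable def Hcond (P : FinProb Ω) {A B : Type*} [Fintype A] [DecidableEq A]
    [Fintype B] [DecidableEq B] (f : Ω → A) (g : Ω → B) : ℝ :=
  H P (fun ω => (f ω, g ω)) - H P g

/-- Mutual information I(f;g). -/
noncomputable def MI (P : FinProb Ω) {A B : Type*} [Fintype A] [DecidableEq A]
    [Fintype B] [DecidableEq B] (f : Ω → A) (g : Ω → B) : ℝ :=
  H P f + H P g - H P (fun ω => (f ω, g ω))

/-- Conditional mutual information I(f;g|h). -/
noncomputable def CMI (P : FinProb Ω) {A B C : Type*} [Fintype A] [DecidableEq A]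
    [Fintype B] [DecidableEq B] [Fintype C] [DecidableEq C]
    (f : Ω → A) (g : Ω → B) (h : Ω → C) : ℝ :=
  H P (fun ω => (f ω, h ω)) + H P (fun ω => (g ω, h ω))
    - H P (fun ω => (f ω, g ω, h ω)) - H P h

/-- Independence of two finite random variables. -/
def Indep (P : FinProb Ω) {A B : Type*} [DecidableEq A] [DecidableEq B]
    (f : Ω → A) (g : Ω → B) : Prop :=
  ∀ a b, pr P (fun ω => (f ω, g ω)) (a, b) = pr P f a * pr P g b

/-- Conditional independence of `f` and `g` given `h` (a Markov chain f − h − g). -/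
def CondIndep (P : FinProb Ω) {A B C : Type*} [DecidableEq A] [DecidableEq B] [DecidableEq C]
    (f : Ω → A) (g : Ω → B) (h : Ω → C) : Prop :=
  ∀ a b c, pr P h c * pr P (fun ω => (f ω, g ω, h ω)) (a, b, c) =
    pr P (fun ω => (f ω, h ω)) (a, c) * pr P (fun ω => (g ω, h ω)) (b, c)

/-- Binary entropy function. -/
noncomputable def Hb (p : ℝ) : ℝ := -(p * Real.logb 2 p) - (1 - p) * Real.logb 2 (1 - p)

/-- Expected Hamming distortion between two random variables. -/
noncomputable def Edist (P : FinProb Ω) {A : Type*} [DecidableEq A] (f g : Ω → A) : ℝ :=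
  ∑ ω, P.μ ω * (if f ω = g ω then 0 else 1)

end MDC

open MDC
/-- The tuple X_(ℬ) = {X_𝒜 : 𝒜 ∈ ℬ}. -/
def tup {Ω 𝒳 : Type} {L : ℕ} (XA : Finset (Fin L) → Ω → 𝒳)
    (B : Finset (Finset (Fin L))) : Ω → ({A : Finset (Fin L) // A ∈ B} → 𝒳) :=
  fun ω A => XA A.1 ω

/-- The set function ψ of the VKG region. -/
noncomputable def psi {Ω 𝒳0 𝒳 : Type} {L : ℕ} [Fintype Ω] [Fintype 𝒳0] [DecidableEq 𝒳0]
    [Fintype 𝒳] [DecidableEq 𝒳] (P : FinProb Ω) (Xr : Ω → 𝒳0)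
    (XA : Finset (Fin L) → Ω → 𝒳) (K : Finset (Fin L)) : ℝ :=
  ((K.card : ℝ) - 1) * MI P Xr (XA ∅)
    - Hcond P (tup XA K.powerset) Xr
    + ∑ A ∈ K.powerset, Hcond P (XA A) (tup XA (A.powerset.erase A))

set_option linter.unusedSectionVars false
set_option maxHeartbeats 1000000

namespace VKGaux
open MDC

variable {Ω : Type*} [Fintype Ω] (P : FinProb Ω)

lemma pr_nonneg {A : Type*} [DecidableEq A] (f : Ω → A) (a : A) : 0 ≤ pr P f a :=
  Finset.sum_nonneg fun ω _ => by by_cases h : f ω = a <;> simp [h, P.nonneg ω]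

lemma sum_pr {A : Type*} [Fintype A] [DecidableEq A] (f : Ω → A) : ∑ a, pr P f a = 1 := by
  unfold pr
  rw [Finset.sum_comm]
  simp only [Finset.sum_ite_eq, Finset.mem_univ, if_true]
  exact P.sum_one

lemma pr_le_one {A : Type*} [Fintype A] [DecidableEq A] (f : Ω → A) (a : A) : pr P f a ≤ 1 := by
  rw [← sum_pr P f]
  exact Finset.single_le_sum (fun a' _ => pr_nonneg P f a') (Finset.mem_univ a)

lemma pr_comp {A B : Type*} [Fintype A] [DecidableEq A] [DecidableEq B]
    (f : Ω → A) (e : A → B) (b : B) :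
    pr P (fun ω => e (f ω)) b = ∑ a, if e a = b then pr P f a else 0 := by
  unfold pr
  have h1 : ∀ a : A, (if e a = b then ∑ ω, if f ω = a then P.μ ω else 0 else 0)
      = ∑ ω, (if f ω = a then (if e a = b then P.μ ω else 0) else 0) := by
    intro a; split_ifs with h <;> simp
  rw [Finset.sum_congr rfl fun a _ => h1 a, Finset.sum_comm]
  refine Finset.sum_congr rfl fun ω _ => ?_
  rw [Finset.sum_ite_eq Finset.univ (f ω) (fun a => if e a = b then P.μ ω else 0)]
  simp

lemma pr_le_pr_comp {A B : Type*} [DecidableEq A] [DecidableEq B]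
    (f : Ω → A) (e : A → B) (a : A) :
    pr P f a ≤ pr P (fun ω => e (f ω)) (e a) := by
  refine Finset.sum_le_sum fun ω _ => ?_
  dsimp only
  split_ifs with h1 h2 h2
  exacts [le_rfl, absurd (congrArg e h1) h2, P.nonneg ω, le_rfl]

lemma H_comp_le {A B : Type*} [Fintype A] [DecidableEq A] [Fintype B] [DecidableEq B]
    (f : Ω → A) (g : Ω → B) (e : A → B) (hg : ∀ ω, g ω = e (f ω)) :
    H P g ≤ H P f := by
  have hge : g = fun ω => e (f ω) := funext hg
  subst hge
  have key : ∑ b, pr P (fun ω => e (f ω)) b * Real.logb 2 (pr P (fun ω => e (f ω)) b)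
      = ∑ a, pr P f a * Real.logb 2 (pr P (fun ω => e (f ω)) (e a)) := by
    have h1 : ∀ b : B, pr P (fun ω => e (f ω)) b * Real.logb 2 (pr P (fun ω => e (f ω)) b)
        = ∑ a, (if e a = b then pr P f a * Real.logb 2 (pr P (fun ω => e (f ω)) b) else 0) := by
      intro b
      rw [pr_comp P f e b, Finset.sum_mul]
      exact Finset.sum_congr rfl fun a _ => by split_ifs <;> simp
    rw [Finset.sum_congr rfl fun b _ => h1 b, Finset.sum_comm]
    refine Finset.sum_congr rfl fun a _ => ?_
    rw [Finset.sum_ite_eq Finset.univ (e a)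
      (fun b => pr P f a * Real.logb 2 (pr P (fun ω => e (f ω)) b))]
    simp
  unfold H
  rw [key, neg_le_neg_iff]
  refine Finset.sum_le_sum fun a _ => ?_
  rcases eq_or_lt_of_le (pr_nonneg P f a) with h0 | h0
  · rw [← h0]; simp
  · exact mul_le_mul_of_nonneg_left
      (Real.logb_le_logb_of_le (by norm_num) h0 (pr_le_pr_comp P f e a)) h0.le

lemma H_congr {A B : Type*} [Fintype A] [DecidableEq A] [Fintype B] [DecidableEq B]
    (f : Ω → A) (g : Ω → B) (u : A → B) (v : B → A)
    (hu : ∀ ω, g ω = u (f ω)) (hv : ∀ ω, f ω = v (g ω)) : H P f = H P g :=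
  le_antisymm (H_comp_le P g f v hv) (H_comp_le P f g u hu)


lemma sum_rotate {α β γ : Type*} [Fintype α] [Fintype β] [Fintype γ] (F : α → β → γ → ℝ) :
    ∑ b, ∑ c, ∑ a, F a b c = ∑ a, ∑ b, ∑ c, F a b c := by
  rw [Finset.sum_congr rfl fun b _ => Finset.sum_comm]
  exact Finset.sum_comm

lemma sum_rotate2 {α β γ : Type*} [Fintype α] [Fintype β] [Fintype γ] (F : α → β → γ → ℝ) :
    ∑ c, ∑ a, ∑ b, F a b c = ∑ a, ∑ b, ∑ c, F a b c := by
  rw [Finset.sum_comm]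
  exact Finset.sum_congr rfl fun a _ => Finset.sum_comm

lemma logb_pointwise (q0 x y z : ℝ) (hq : 0 ≤ q0) (hx : q0 ≤ x) (hy : q0 ≤ y) (hxz : x ≤ z) :
    q0 * Real.logb 2 x + q0 * Real.logb 2 y - q0 * Real.logb 2 q0 - q0 * Real.logb 2 z
      ≤ (x * y / z - q0) / Real.log 2 := by
  have hlog2 : (0:ℝ) < Real.log 2 := Real.log_pos one_lt_two
  rcases eq_or_lt_of_le hq with h0 | h0
  · rw [← h0]
    have hx0 : 0 ≤ x := h0 ▸ hx
    have hy0 : 0 ≤ y := h0 ▸ hy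
    have hz0 : 0 ≤ z := le_trans hx0 hxz
    have : 0 ≤ x * y / z := div_nonneg (mul_nonneg hx0 hy0) hz0
    simp only [zero_mul, add_zero, sub_zero, zero_sub, neg_zero]
    positivity
  · have hx0 : 0 < x := lt_of_lt_of_le h0 hx
    have hy0 : 0 < y := lt_of_lt_of_le h0 hy
    have hz0 : 0 < z := lt_of_lt_of_le hx0 hxz
    have main : q0 * Real.log x + q0 * Real.log y - q0 * Real.log q0 - q0 * Real.log z
        ≤ x * y / z - q0 := by
      have hexp : Real.log (x * y / (q0 * z))
          = Real.log x + Real.log y - Real.log q0 - Real.log z := by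
        rw [Real.log_div (by positivity) (by positivity), Real.log_mul hx0.ne' hy0.ne',
          Real.log_mul h0.ne' hz0.ne']
        ring
      have hlog : Real.log (x * y / (q0 * z)) ≤ x * y / (q0 * z) - 1 :=
        Real.log_le_sub_one_of_pos (by positivity)
      rw [hexp] at hlog
      have h2 := mul_le_mul_of_nonneg_left hlog hq
      have h3 : q0 * (x * y / (q0 * z) - 1) = x * y / z - q0 := by
        field_simp
      nlinarith [h2, h3]
    calc q0 * Real.logb 2 x + q0 * Real.logb 2 y - q0 * Real.logb 2 q0 - q0 * Real.logb 2 z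
        = (q0 * Real.log x + q0 * Real.log y - q0 * Real.log q0 - q0 * Real.log z)
            / Real.log 2 := by
          simp only [Real.logb]
          ring
      _ ≤ (x * y / z - q0) / Real.log 2 := by gcongr

section Submod

variable {A B C : Type*} [Fintype A] [DecidableEq A] [Fintype B] [DecidableEq B]
  [Fintype C] [DecidableEq C] (f : Ω → A) (g : Ω → B) (h : Ω → C)

lemma marg_fh (a : A) (c : C) : pr P (fun ω => (f ω, h ω)) (a, c)
    = ∑ b, pr P (fun ω => (f ω, g ω, h ω)) (a, b, c) := by
  simp only [pr]
  conv_rhs => rw [Finset.sum_comm]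
  refine Finset.sum_congr rfl fun ω _ => ?_
  have h1 : ∀ b : B, (if (f ω, g ω, h ω) = (a, b, c) then P.μ ω else 0)
      = (if g ω = b then (if (f ω, h ω) = (a, c) then P.μ ω else 0) else 0) := fun b => by
    by_cases h2 : g ω = b <;> by_cases h3 : f ω = a <;> by_cases h4 : h ω = c <;>
      simp_all [Prod.ext_iff]
  rw [Finset.sum_congr rfl fun b _ => h1 b, Finset.sum_ite_eq]
  simp

lemma marg_gh (b : B) (c : C) : pr P (fun ω => (g ω, h ω)) (b, c)
    = ∑ a, pr P (fun ω => (f ω, g ω, h ω)) (a, b, c) := by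
  simp only [pr]
  conv_rhs => rw [Finset.sum_comm]
  refine Finset.sum_congr rfl fun ω _ => ?_
  have h1 : ∀ a : A, (if (f ω, g ω, h ω) = (a, b, c) then P.μ ω else 0)
      = (if f ω = a then (if (g ω, h ω) = (b, c) then P.μ ω else 0) else 0) := fun a => by
    by_cases h2 : f ω = a <;> by_cases h3 : g ω = b <;> by_cases h4 : h ω = c <;>
      simp_all [Prod.ext_iff]
  rw [Finset.sum_congr rfl fun a _ => h1 a, Finset.sum_ite_eq]
  simp

lemma marg_h_fh (c : C) : pr P h c = ∑ a, pr P (fun ω => (f ω, h ω)) (a, c) := by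
  simp only [pr]
  conv_rhs => rw [Finset.sum_comm]
  refine Finset.sum_congr rfl fun ω _ => ?_
  have h1 : ∀ a : A, (if (f ω, h ω) = (a, c) then P.μ ω else 0)
      = (if f ω = a then (if h ω = c then P.μ ω else 0) else 0) := fun a => by
    by_cases h2 : f ω = a <;> by_cases h3 : h ω = c <;> simp_all [Prod.ext_iff]
  rw [Finset.sum_congr rfl fun a _ => h1 a, Finset.sum_ite_eq]
  simp

lemma marg_h_gh (c : C) : pr P h c = ∑ b, pr P (fun ω => (g ω, h ω)) (b, c) := by
  simp only [pr]
  conv_rhs => rw [Finset.sum_comm]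
  refine Finset.sum_congr rfl fun ω _ => ?_
  have h1 : ∀ b : B, (if (g ω, h ω) = (b, c) then P.μ ω else 0)
      = (if g ω = b then (if h ω = c then P.μ ω else 0) else 0) := fun b => by
    by_cases h2 : g ω = b <;> by_cases h3 : h ω = c <;> simp_all [Prod.ext_iff]
  rw [Finset.sum_congr rfl fun b _ => h1 b, Finset.sum_ite_eq]
  simp

end Submod


lemma H_submod {A B C : Type*} [Fintype A] [DecidableEq A] [Fintype B] [DecidableEq B]
    [Fintype C] [DecidableEq C] (f : Ω → A) (g : Ω → B) (h : Ω → C) :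
    H P (fun ω => (f ω, g ω, h ω)) + H P h
      ≤ H P (fun ω => (f ω, h ω)) + H P (fun ω => (g ω, h ω)) := by
  classical
  have hlog2 : (0:ℝ) < Real.log 2 := Real.log_pos one_lt_two
  have E1 : H P (fun ω => (f ω, g ω, h ω))
      = -∑ a, ∑ b, ∑ c, pr P (fun ω => (f ω, g ω, h ω)) (a, b, c)
          * Real.logb 2 (pr P (fun ω => (f ω, g ω, h ω)) (a, b, c)) := by
    unfold H
    simp only [Fintype.sum_prod_type]
  have E2 : H P (fun ω => (f ω, h ω))
      = -∑ a, ∑ b, ∑ c, pr P (fun ω => (f ω, g ω, h ω)) (a, b, c)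
          * Real.logb 2 (pr P (fun ω => (f ω, h ω)) (a, c)) := by
    unfold H
    rw [Fintype.sum_prod_type]
    congr 1
    refine Finset.sum_congr rfl fun a _ => ?_
    conv_rhs => rw [Finset.sum_comm]
    refine Finset.sum_congr rfl fun c _ => ?_
    rw [← Finset.sum_mul, ← marg_fh P f g h a c]
  have E3 : H P (fun ω => (g ω, h ω))
      = -∑ a, ∑ b, ∑ c, pr P (fun ω => (f ω, g ω, h ω)) (a, b, c)
          * Real.logb 2 (pr P (fun ω => (g ω, h ω)) (b, c)) := by
    unfold H
    rw [Fintype.sum_prod_type,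
      ← sum_rotate (fun a b c => pr P (fun ω => (f ω, g ω, h ω)) (a, b, c)
        * Real.logb 2 (pr P (fun ω => (g ω, h ω)) (b, c)))]
    congr 1
    refine Finset.sum_congr rfl fun b _ => Finset.sum_congr rfl fun c _ => ?_
    rw [← Finset.sum_mul, ← marg_gh P f g h b c]
  have m3 : ∀ c, pr P h c = ∑ a, ∑ b, pr P (fun ω => (f ω, g ω, h ω)) (a, b, c) := by
    intro c
    rw [marg_h_fh P f h c]
    exact Finset.sum_congr rfl fun a _ => marg_fh P f g h a c
  have E4 : H P h
      = -∑ a, ∑ b, ∑ c, pr P (fun ω => (f ω, g ω, h ω)) (a, b, c)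
          * Real.logb 2 (pr P h c) := by
    unfold H
    rw [← sum_rotate2 (fun a b c => pr P (fun ω => (f ω, g ω, h ω)) (a, b, c)
        * Real.logb 2 (pr P h c))]
    congr 1
    refine Finset.sum_congr rfl fun c _ => ?_
    symm
    calc ∑ a, ∑ b, pr P (fun ω => (f ω, g ω, h ω)) (a, b, c) * Real.logb 2 (pr P h c)
        = ∑ a, (∑ b, pr P (fun ω => (f ω, g ω, h ω)) (a, b, c)) * Real.logb 2 (pr P h c) :=
          Finset.sum_congr rfl fun a _ => (Finset.sum_mul _ _ _).symm
      _ = (∑ a, ∑ b, pr P (fun ω => (f ω, g ω, h ω)) (a, b, c)) * Real.logb 2 (pr P h c) :=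
          (Finset.sum_mul _ _ _).symm
      _ = pr P h c * Real.logb 2 (pr P h c) := by rw [← m3 c]
  rw [E1, E2, E3, E4]
  have key : ∑ a, ∑ b, ∑ c,
      (pr P (fun ω => (f ω, g ω, h ω)) (a, b, c)
          * Real.logb 2 (pr P (fun ω => (f ω, h ω)) (a, c))
        + pr P (fun ω => (f ω, g ω, h ω)) (a, b, c)
          * Real.logb 2 (pr P (fun ω => (g ω, h ω)) (b, c))
        - pr P (fun ω => (f ω, g ω, h ω)) (a, b, c)
          * Real.logb 2 (pr P (fun ω => (f ω, g ω, h ω)) (a, b, c))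
        - pr P (fun ω => (f ω, g ω, h ω)) (a, b, c) * Real.logb 2 (pr P h c)) ≤ 0 := by
    have hq1 : ∑ a, ∑ b, ∑ c, pr P (fun ω => (f ω, g ω, h ω)) (a, b, c) = 1 := by
      have h1 := sum_pr P (fun ω => (f ω, g ω, h ω))
      simp only [Fintype.sum_prod_type] at h1
      exact h1
    have hT : ∑ a, ∑ b, ∑ c, pr P (fun ω => (f ω, h ω)) (a, c)
        * pr P (fun ω => (g ω, h ω)) (b, c) / pr P h c ≤ 1 := by
      rw [← sum_rotate2 (fun a b c => pr P (fun ω => (f ω, h ω)) (a, c)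
        * pr P (fun ω => (g ω, h ω)) (b, c) / pr P h c)]
      calc ∑ c, ∑ a, ∑ b, pr P (fun ω => (f ω, h ω)) (a, c)
            * pr P (fun ω => (g ω, h ω)) (b, c) / pr P h c
          ≤ ∑ c, pr P h c := by
            refine Finset.sum_le_sum fun c _ => ?_
            have hc : ∑ a, ∑ b, pr P (fun ω => (f ω, h ω)) (a, c)
                * pr P (fun ω => (g ω, h ω)) (b, c) / pr P h c
                = pr P h c * (pr P h c / pr P h c) := by
              calc ∑ a, ∑ b, pr P (fun ω => (f ω, h ω)) (a, c)
                    * pr P (fun ω => (g ω, h ω)) (b, c) / pr P h c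
                  = ∑ a, pr P (fun ω => (f ω, h ω)) (a, c)
                      * ((∑ b, pr P (fun ω => (g ω, h ω)) (b, c)) / pr P h c) := by
                    refine Finset.sum_congr rfl fun a _ => ?_
                    simp only [mul_div_assoc]
                    rw [← Finset.mul_sum, ← Finset.sum_div]
                _ = (∑ a, pr P (fun ω => (f ω, h ω)) (a, c))
                      * ((∑ b, pr P (fun ω => (g ω, h ω)) (b, c)) / pr P h c) :=
                    (Finset.sum_mul _ _ _).symm
                _ = pr P h c * (pr P h c / pr P h c) := by
                    rw [← marg_h_fh P f h c, ← marg_h_gh P g h c]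
            rw [hc]
            rcases eq_or_ne (pr P h c) 0 with h0 | h0
            · rw [h0]; simp
            · rw [div_self h0, mul_one]
        _ = 1 := sum_pr P h
    have pointwise : ∀ a b c,
        pr P (fun ω => (f ω, g ω, h ω)) (a, b, c)
            * Real.logb 2 (pr P (fun ω => (f ω, h ω)) (a, c))
          + pr P (fun ω => (f ω, g ω, h ω)) (a, b, c)
            * Real.logb 2 (pr P (fun ω => (g ω, h ω)) (b, c))
          - pr P (fun ω => (f ω, g ω, h ω)) (a, b, c)
            * Real.logb 2 (pr P (fun ω => (f ω, g ω, h ω)) (a, b, c))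
          - pr P (fun ω => (f ω, g ω, h ω)) (a, b, c) * Real.logb 2 (pr P h c)
        ≤ (pr P (fun ω => (f ω, h ω)) (a, c) * pr P (fun ω => (g ω, h ω)) (b, c) / pr P h c
            - pr P (fun ω => (f ω, g ω, h ω)) (a, b, c)) / Real.log 2 := by
      intro a b c
      refine logb_pointwise _ _ _ _ (pr_nonneg P _ _) ?_ ?_ ?_
      · rw [marg_fh P f g h a c]
        exact Finset.single_le_sum
          (f := fun b' => pr P (fun ω => (f ω, g ω, h ω)) (a, b', c))
          (fun b' _ => pr_nonneg P _ _) (Finset.mem_univ b)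
      · rw [marg_gh P f g h b c]
        exact Finset.single_le_sum
          (f := fun a' => pr P (fun ω => (f ω, g ω, h ω)) (a', b, c))
          (fun a' _ => pr_nonneg P _ _) (Finset.mem_univ a)
      · rw [marg_h_fh P f h c]
        exact Finset.single_le_sum
          (f := fun a' => pr P (fun ω => (f ω, h ω)) (a', c))
          (fun a' _ => pr_nonneg P _ _) (Finset.mem_univ a)
    calc ∑ a, ∑ b, ∑ c,
        (pr P (fun ω => (f ω, g ω, h ω)) (a, b, c)
            * Real.logb 2 (pr P (fun ω => (f ω, h ω)) (a, c))
          + pr P (fun ω => (f ω, g ω, h ω)) (a, b, c)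
            * Real.logb 2 (pr P (fun ω => (g ω, h ω)) (b, c))
          - pr P (fun ω => (f ω, g ω, h ω)) (a, b, c)
            * Real.logb 2 (pr P (fun ω => (f ω, g ω, h ω)) (a, b, c))
          - pr P (fun ω => (f ω, g ω, h ω)) (a, b, c) * Real.logb 2 (pr P h c))
        ≤ ∑ a, ∑ b, ∑ c,
          (pr P (fun ω => (f ω, h ω)) (a, c) * pr P (fun ω => (g ω, h ω)) (b, c) / pr P h c
            - pr P (fun ω => (f ω, g ω, h ω)) (a, b, c)) / Real.log 2 :=
          Finset.sum_le_sum fun a _ => Finset.sum_le_sum fun b _ =>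
            Finset.sum_le_sum fun c _ => pointwise a b c
      _ = ((∑ a, ∑ b, ∑ c, pr P (fun ω => (f ω, h ω)) (a, c)
            * pr P (fun ω => (g ω, h ω)) (b, c) / pr P h c)
          - ∑ a, ∑ b, ∑ c, pr P (fun ω => (f ω, g ω, h ω)) (a, b, c)) / Real.log 2 := by
          simp only [← Finset.sum_div, Finset.sum_sub_distrib]
      _ ≤ 0 := by
          rw [hq1]
          apply div_nonpos_of_nonpos_of_nonneg _ hlog2.le
          linarith [hT]
  have hsplit : ∑ a, ∑ b, ∑ c,
      (pr P (fun ω => (f ω, g ω, h ω)) (a, b, c)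
          * Real.logb 2 (pr P (fun ω => (f ω, h ω)) (a, c))
        + pr P (fun ω => (f ω, g ω, h ω)) (a, b, c)
          * Real.logb 2 (pr P (fun ω => (g ω, h ω)) (b, c))
        - pr P (fun ω => (f ω, g ω, h ω)) (a, b, c)
          * Real.logb 2 (pr P (fun ω => (f ω, g ω, h ω)) (a, b, c))
        - pr P (fun ω => (f ω, g ω, h ω)) (a, b, c) * Real.logb 2 (pr P h c))
      = (∑ a, ∑ b, ∑ c, pr P (fun ω => (f ω, g ω, h ω)) (a, b, c)
          * Real.logb 2 (pr P (fun ω => (f ω, h ω)) (a, c)))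
        + (∑ a, ∑ b, ∑ c, pr P (fun ω => (f ω, g ω, h ω)) (a, b, c)
          * Real.logb 2 (pr P (fun ω => (g ω, h ω)) (b, c)))
        - (∑ a, ∑ b, ∑ c, pr P (fun ω => (f ω, g ω, h ω)) (a, b, c)
          * Real.logb 2 (pr P (fun ω => (f ω, g ω, h ω)) (a, b, c)))
        - (∑ a, ∑ b, ∑ c, pr P (fun ω => (f ω, g ω, h ω)) (a, b, c)
          * Real.logb 2 (pr P h c)) := by
    simp only [Finset.sum_sub_distrib, Finset.sum_add_distrib]
  rw [hsplit] at key
  linarith [key]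



lemma Hcond_nonneg {A B : Type*} [Fintype A] [DecidableEq A] [Fintype B] [DecidableEq B]
    (f : Ω → A) (g : Ω → B) : 0 ≤ Hcond P f g :=
  sub_nonneg.mpr (H_comp_le P (fun ω => (f ω, g ω)) g Prod.snd (fun ω => rfl))

section FentSec

variable {Ω₀ 𝒳0 𝒳 : Type} [Fintype Ω₀] {L : ℕ} [Fintype 𝒳0] [DecidableEq 𝒳0]
    [Fintype 𝒳] [DecidableEq 𝒳] (P₀ : FinProb Ω₀) (Xr : Ω₀ → 𝒳0) (XA : Finset (Fin L) → Ω₀ → 𝒳)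

noncomputable def Fent (B : Finset (Finset (Fin L))) : ℝ :=
  H (A := ({A : Finset (Fin L) // A ∈ B} → 𝒳) × 𝒳0) P₀ (fun ω => (tup XA B ω, Xr ω))

lemma Fent_submod (B C : Finset (Finset (Fin L))) :
    Fent P₀ Xr XA (B ∪ C) + Fent P₀ Xr XA (B ∩ C) ≤ Fent P₀ Xr XA B + Fent P₀ Xr XA C := by
  classical
  have hsub := H_submod P₀ (tup XA B) (tup XA C) (fun ω => (tup XA (B ∩ C) ω, Xr ω))
  have e1 : H P₀ (fun ω => (tup XA B ω, tup XA C ω, (tup XA (B ∩ C) ω, Xr ω)))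
      = Fent P₀ Xr XA (B ∪ C) := by
    refine H_congr P₀ _ _
      (fun q => ((fun A => if hA : A.1 ∈ B then q.1 ⟨A.1, hA⟩
          else q.2.1 ⟨A.1, (Finset.mem_union.mp A.2).resolve_left hA⟩), q.2.2.2))
      (fun t => (fun A => t.1 ⟨A.1, Finset.mem_union_left C A.2⟩,
        (fun A => t.1 ⟨A.1, Finset.mem_union_right B A.2⟩,
          ((fun A => t.1 ⟨A.1, Finset.mem_union_left C (Finset.mem_of_mem_inter_left A.2)⟩),
            t.2)))) ?_ (fun ω => rfl)
    intro ω
    refine congrArg₂ Prod.mk ?_ rfl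
    funext A'
    by_cases hA' : A'.1 ∈ B
    · rw [dif_pos hA']; rfl
    · rw [dif_neg hA']; rfl
  have e2 : H P₀ (fun ω => (tup XA B ω, (tup XA (B ∩ C) ω, Xr ω)))
      = Fent P₀ Xr XA B :=
    H_congr P₀ _ _ (fun q => (q.1, q.2.2))
      (fun t => (t.1, (fun A => t.1 ⟨A.1, Finset.mem_of_mem_inter_left A.2⟩, t.2)))
      (fun ω => rfl) (fun ω => rfl)
  have e3 : H P₀ (fun ω => (tup XA C ω, (tup XA (B ∩ C) ω, Xr ω)))
      = Fent P₀ Xr XA C :=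
    H_congr P₀ _ _ (fun q => (q.1, q.2.2))
      (fun t => (t.1, (fun A => t.1 ⟨A.1, Finset.mem_of_mem_inter_right A.2⟩, t.2)))
      (fun ω => rfl) (fun ω => rfl)
  rw [e1, e2, e3] at hsub
  exact hsub

lemma Fent_insert_le (A : Finset (Fin L)) (B : Finset (Finset (Fin L)))
    (hC : A.powerset.erase A ⊆ B) :
    Fent P₀ Xr XA (insert A B) ≤ Fent P₀ Xr XA B
      + Hcond P₀ (XA A) (tup XA (A.powerset.erase A)) := by
  classical
  have hsub := H_submod P₀ (XA A) (fun ω => (tup XA B ω, Xr ω)) (tup XA (A.powerset.erase A))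
  have e1 : H P₀ (fun ω => (XA A ω, (tup XA B ω, Xr ω), tup XA (A.powerset.erase A) ω))
      = Fent P₀ Xr XA (insert A B) := by
    refine H_congr P₀ _ _
      (fun q => ((fun A' => if hA' : A'.1 ∈ B then q.2.1.1 ⟨A'.1, hA'⟩ else q.1), q.2.1.2))
      (fun t => (t.1 ⟨A, Finset.mem_insert_self A B⟩,
        ((fun A' => t.1 ⟨A'.1, Finset.mem_insert_of_mem A'.2⟩, t.2),
          fun A' => t.1 ⟨A'.1, Finset.mem_insert_of_mem (hC A'.2)⟩))) ?_ (fun ω => rfl)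
    intro ω
    refine congrArg₂ Prod.mk ?_ rfl
    funext A'
    by_cases hA' : A'.1 ∈ B
    · rw [dif_pos hA']; rfl
    · rw [dif_neg hA']
      have hx : A'.1 = A := (Finset.mem_insert.mp A'.2).resolve_right hA'
      show XA A'.1 ω = XA A ω
      rw [hx]
  have e2 : H P₀ (fun ω => ((tup XA B ω, Xr ω), tup XA (A.powerset.erase A) ω))
      = Fent P₀ Xr XA B :=
    H_congr P₀ _ _ (fun q => q.1)
      (fun t => (t, fun A' => t.1 ⟨A'.1, hC A'.2⟩)) (fun ω => rfl) (fun ω => rfl)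
  rw [e1, e2] at hsub
  have e3 : Hcond P₀ (XA A) (tup XA (A.powerset.erase A))
      = H P₀ (fun ω => (XA A ω, tup XA (A.powerset.erase A) ω))
        - H P₀ (tup XA (A.powerset.erase A)) := rfl
  linarith [hsub]

lemma Fent_union_le (B0 : Finset (Finset (Fin L))) :
    ∀ D : Finset (Finset (Fin L)), (∀ A ∈ D, A.powerset.erase A ⊆ B0 ∪ D) →
      Fent P₀ Xr XA (B0 ∪ D) ≤ Fent P₀ Xr XA B0
        + ∑ A ∈ D \ B0, Hcond P₀ (XA A) (tup XA (A.powerset.erase A)) := by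
  intro D
  induction D using Finset.strongInduction with
  | _ D ih =>
    intro hD
    rcases D.eq_empty_or_nonempty with rfl | hne
    · simp
    obtain ⟨A, hAD, hAmax⟩ := Finset.exists_max_image D Finset.card hne
    have hss : D.erase A ⊂ D := Finset.erase_ssubset hAD
    have hD'cond : ∀ A' ∈ D.erase A, A'.powerset.erase A' ⊆ B0 ∪ D.erase A := by
      intro A' hA' Bx hBx
      have hBxD : Bx ∈ B0 ∪ D := hD A' (Finset.mem_of_mem_erase hA') hBx
      have hBxA : Bx ≠ A := by
        intro hEq
        have hme := Finset.mem_erase.mp hBx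
        have h2 : Bx.card < A'.card :=
          Finset.card_lt_card (ssubset_of_subset_of_ne (Finset.mem_powerset.mp hme.2) hme.1)
        have h3 : A'.card ≤ A.card := hAmax A' (Finset.mem_of_mem_erase hA')
        rw [hEq] at h2
        omega
      rcases Finset.mem_union.mp hBxD with hmem | hmem
      · exact Finset.mem_union_left _ hmem
      · exact Finset.mem_union_right _ (Finset.mem_erase.mpr ⟨hBxA, hmem⟩)
    have ihD' := ih (D.erase A) hss hD'cond
    by_cases hAB0 : A ∈ B0
    · have hU : B0 ∪ D = B0 ∪ D.erase A := by
        ext x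
        simp only [Finset.mem_union, Finset.mem_erase]
        constructor
        · rintro (hx | hx)
          · exact Or.inl hx
          · by_cases hxa : x = A
            · exact Or.inl (hxa ▸ hAB0)
            · exact Or.inr ⟨hxa, hx⟩
        · rintro (hx | hx)
          · exact Or.inl hx
          · exact Or.inr hx.2
      have hS : D \ B0 = D.erase A \ B0 := by
        ext x
        simp only [Finset.mem_sdiff, Finset.mem_erase]
        constructor
        · rintro ⟨h1, h2⟩
          exact ⟨⟨fun hx => h2 (hx ▸ hAB0), h1⟩, h2⟩
        · rintro ⟨⟨_, h1⟩, h2⟩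
          exact ⟨h1, h2⟩
      rw [hU, hS]
      exact ihD'
    · have hU : B0 ∪ D = insert A (B0 ∪ D.erase A) := by
        conv_lhs => rw [← Finset.insert_erase hAD]
        rw [Finset.union_insert]
      have hsubc : A.powerset.erase A ⊆ B0 ∪ D.erase A := by
        intro Bx hBx
        have hBxD : Bx ∈ B0 ∪ D := hD A hAD hBx
        have hme := Finset.mem_erase.mp hBx
        rcases Finset.mem_union.mp hBxD with hmem | hmem
        · exact Finset.mem_union_left _ hmem
        · exact Finset.mem_union_right _ (Finset.mem_erase.mpr ⟨hme.1, hmem⟩)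
      have hchain := Fent_insert_le P₀ Xr XA A (B0 ∪ D.erase A) hsubc
      have hS : D \ B0 = insert A (D.erase A \ B0) := by
        ext x
        simp only [Finset.mem_sdiff, Finset.mem_insert, Finset.mem_erase]
        constructor
        · rintro ⟨h1, h2⟩
          by_cases hxa : x = A
          · exact Or.inl hxa
          · exact Or.inr ⟨⟨hxa, h1⟩, h2⟩
        · rintro (rfl | ⟨⟨_, h1⟩, h2⟩)
          · exact ⟨hAD, hAB0⟩
          · exact ⟨h1, h2⟩
      have hAnot : A ∉ D.erase A \ B0 := fun hx =>
        (Finset.mem_erase.mp (Finset.mem_sdiff.mp hx).1).1 rfl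
      rw [hU, hS, Finset.sum_insert hAnot]
      linarith [hchain, ihD']

end FentSec
end VKGaux

/-- ψ is supermodular. -/
theorem stmt6 {Ω 𝒳0 𝒳 : Type} {L : ℕ} [Fintype Ω] [Fintype 𝒳0] [DecidableEq 𝒳0]
    [Fintype 𝒳] [DecidableEq 𝒳] (P : FinProb Ω) (Xr : Ω → 𝒳0)
    (XA : Finset (Fin L) → Ω → 𝒳) (S T : Finset (Fin L)) :
    psi P Xr XA S + psi P Xr XA T ≤ psi P Xr XA (S ∪ T) + psi P Xr XA (S ∩ T) := by
  classical
  have hc : ∀ K : Finset (Fin L), Hcond P (tup XA K.powerset) Xr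
      = VKGaux.Fent P Xr XA K.powerset - H P Xr := fun K => rfl
  have hpow_inter : (S ∩ T).powerset = S.powerset ∩ T.powerset := by
    ext x
    simp only [Finset.mem_powerset, Finset.mem_inter, Finset.subset_inter_iff]
  have hB0sub : S.powerset ∪ T.powerset ⊆ (S ∪ T).powerset := by
    apply Finset.union_subset
    · exact Finset.powerset_mono.mpr Finset.subset_union_left
    · exact Finset.powerset_mono.mpr Finset.subset_union_right
  have hcond : ∀ A ∈ (S ∪ T).powerset,
      A.powerset.erase A ⊆ (S.powerset ∪ T.powerset) ∪ (S ∪ T).powerset := by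
    intro A hA Bx hBx
    refine Finset.mem_union_right _ ?_
    have h1 : Bx ⊆ A := Finset.mem_powerset.mp (Finset.mem_erase.mp hBx).2
    exact Finset.mem_powerset.mpr (h1.trans (Finset.mem_powerset.mp hA))
  have hchain := VKGaux.Fent_union_le P Xr XA (S.powerset ∪ T.powerset) (S ∪ T).powerset hcond
  rw [Finset.union_eq_right.mpr hB0sub] at hchain
  have hsubm := VKGaux.Fent_submod P Xr XA S.powerset T.powerset
  rw [← hpow_inter] at hsubm
  have hsum1 : (∑ A ∈ S.powerset, Hcond P (XA A) (tup XA (A.powerset.erase A)))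
      + ∑ A ∈ T.powerset, Hcond P (XA A) (tup XA (A.powerset.erase A))
      = (∑ A ∈ S.powerset ∪ T.powerset, Hcond P (XA A) (tup XA (A.powerset.erase A)))
        + ∑ A ∈ (S ∩ T).powerset, Hcond P (XA A) (tup XA (A.powerset.erase A)) := by
    rw [hpow_inter]
    exact (Finset.sum_union_inter).symm
  have hsum2 : (∑ A ∈ (S ∪ T).powerset \ (S.powerset ∪ T.powerset),
        Hcond P (XA A) (tup XA (A.powerset.erase A)))
      + ∑ A ∈ S.powerset ∪ T.powerset, Hcond P (XA A) (tup XA (A.powerset.erase A))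
      = ∑ A ∈ (S ∪ T).powerset, Hcond P (XA A) (tup XA (A.powerset.erase A)) :=
    Finset.sum_sdiff hB0sub
  have hcardR : (((S ∪ T).card : ℝ)) + ((S ∩ T).card : ℝ) = (S.card : ℝ) + (T.card : ℝ) := by
    exact_mod_cast Finset.card_union_add_card_inter S T
  have hMI : ((S.card : ℝ) - 1) * MI P Xr (XA ∅) + ((T.card : ℝ) - 1) * MI P Xr (XA ∅)
      = (((S ∪ T).card : ℝ) - 1) * MI P Xr (XA ∅)
        + (((S ∩ T).card : ℝ) - 1) * MI P Xr (XA ∅) := by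
    linear_combination (-(MI P Xr (XA ∅))) * hcardR
  unfold psi
  rw [hc S, hc T, hc (S ∪ T), hc (S ∩ T)]
  linarith [hchain, hsubm, hsum1, hsum2, hMI]
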